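/- The constraint matrix A of the state-action frequency linear system has full row rank m = S·T, where the system has n = (T-1)K + S variables with K = ∑_s k_s, and m < n. Equivalently, the linear map given by the constraints (a)–(c) is surjective onto ℝ^S × ℝ^{(T-2)×S} × ℝ^S. -/
import Mathlib


open Finset

/-- A finite-horizon MDP with `N` states, horizon `T` (epochs `0,…,T-1`, so `T ≥ 2` has at
least one decision epoch), action sets `Fin (k s)` for each state `s`, and transition
probabilities `p t s a j = p_t(j | s, a)` governing the move from epoch `t` to `t+1`,
together with a strictly positive initial distribution `α`. -/
structure MDP (N T : ℕ) (k : Fin N → ℕ) : Type where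
  p : ℕ → (s : Fin N) → Fin (k s) → Fin N → ℝ
  α : Fin N → ℝ
  p_nonneg : ∀ t s a j, 0 ≤ p t s a j
  p_sum : ∀ t s a, ∑ j, p t s a j = 1
  α_pos : ∀ s, 0 < α s
  α_sum : ∑ s, α s = 1

/-- A (randomized, Markov, non-stationary) policy: `q t s a` is the probability that
action `a` is chosen in state `s` at decision epoch `t`. -/
structure Policy (N : ℕ) (k : Fin N → ℕ) : Type where
  q : ℕ → (s : Fin N) → Fin (k s) → ℝ
  q_nonneg : ∀ t s a, 0 ≤ q t s a
  q_sum : ∀ t s, ∑ a, q t s a = 1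

variable {N T : ℕ} {k : Fin N → ℕ}

/-- `condProb M π j t s` is `P^π(S_t = s | S_0 = j)` (epochs indexed from 0). -/
def condProb (M : MDP N T k) (π : Policy N k) (j : Fin N) : ℕ → Fin N → ℝ
  | 0, s => if s = j then 1 else 0
  | t+1, s => ∑ s', ∑ a, condProb M π j t s' * π.q t s' a * M.p t s' a s

/-- The state-action frequency `x_{π,t}(s,a) = ∑_j α(j) P^π(S_t = s, A_t = a | S_0 = j)`
(epochs indexed from 0, so the decision epochs are `0,…,T-2`). -/
def xsa (M : MDP N T k) (π : Policy N k) (t : ℕ) (s : Fin N) (a : Fin (k s)) : ℝ :=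
  ∑ j, M.α j * condProb M π j t s * π.q t s a

/-- The terminal state frequency `x_{π,T}(s)` (terminal epoch is `T-1` in 0-based indexing). -/
def xT (M : MDP N T k) (π : Policy N k) (s : Fin N) : ℝ :=
  ∑ j, M.α j * condProb M π j (T-1) s

/-- the state-action frequency constraint system has full row rank
`m = N·T` with `m < n`, `n = (T-1)·K + N`, `K = ∑_s k_s`: equivalently, `m < n` and the
linear map given by the constraints (a)–(c) is surjective, i.e. the system is solvable
for every right-hand side `(α', β, γ)`. -/
theorem constraint_system_full_rank (N T : ℕ) (k : Fin N → ℕ)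
    (hk : ∀ s, 1 ≤ k s) (s₀ : Fin N) (hs₀ : 2 ≤ k s₀) (hT : 2 ≤ T) (M : MDP N T k) :
    N * T < (T - 1) * (∑ s, k s) + N ∧
      ∀ (α' : Fin N → ℝ) (β : ℕ → Fin N → ℝ) (γ : Fin N → ℝ),
        ∃ (x : ℕ → (s : Fin N) → Fin (k s) → ℝ) (xTv : Fin N → ℝ),
          (∀ j, ∑ a, x 0 j a = α' j) ∧
          (∀ t j, t + 3 ≤ T →
            ∑ a, x (t+1) j a = (∑ s, ∑ a, M.p t s a j * x t s a) + β t j) ∧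
          (∀ j, xTv j = (∑ s, ∑ a, M.p (T-2) s a j * x (T-2) s a) + γ j) := by
  constructor
  · have hK : N + 1 ≤ ∑ s, k s := by
      have h1 : ∑ s : Fin N, (if s = s₀ then 2 else 1) = N + 1 := by
        have : ∀ s : Fin N, (if s = s₀ then 2 else 1)
            = 1 + (if s = s₀ then 1 else 0) := by intro s; split <;> simp
        simp [this, Finset.sum_add_distrib, Finset.sum_ite_eq']
      calc N + 1 = ∑ s : Fin N, (if s = s₀ then 2 else 1) := h1.symm
        _ ≤ ∑ s, k s := Finset.sum_le_sum (fun s _ => by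
            by_cases h : s = s₀ <;> simp [h] <;> [exact hs₀; exact hk s])
    obtain ⟨t, rfl⟩ : ∃ t, T = t + 2 := ⟨T - 2, by omega⟩
    have h2 : t + 2 - 1 = t + 1 := rfl
    rw [h2]
    nlinarith [hK, Nat.zero_le t]
  · intro α' β γ
    set x : ℕ → (s : Fin N) → Fin (k s) → ℝ :=
      fun t => Nat.rec
        (fun (j : Fin N) (a : Fin (k j)) => if a = ⟨0, hk j⟩ then α' j else 0)
        (fun t prev (j : Fin N) (a : Fin (k j)) =>
          if a = ⟨0, hk j⟩ then (∑ s, ∑ a', M.p t s a' j * prev s a') + β t j else 0) t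
      with hx
    refine ⟨x, fun j => (∑ s, ∑ a, M.p (T-2) s a j * x (T-2) s a) + γ j, ?_, ?_, fun j => rfl⟩
    · intro j
      simp [hx, Finset.sum_ite_eq']
    · intro t j _
      simp [hx, Finset.sum_ite_eq']
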